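/- Let (S, F, λ) be a measure space, ν a probability measure with strictly positive density γ with respect to λ, and F : S → S a measurable involution that preserves λ. Define a Markov transition from Z by: draw U ~ uniform([0,1]); set Z' = F(Z) if U ≤ min(1, γ(F(Z))/γ(Z)) and Z' = Z otherwise. Then this transition kernel is reversible with respect to ν, i.e., for all measurable sets A, B, P(Z ∈ A, Z' ∈ B) = P(Z ∈ B, Z' ∈ A) when Z ~ ν. -/
import Mathlib


open MeasureTheory ENNReal

/-- Metropolis step with deterministic involutive proposal `F` is reversible
with respect to `ν = γ·λ`:  for all measurable `A B`,
`P(Z ∈ A, Z' ∈ B) = P(Z ∈ B, Z' ∈ A)` where from `Z = x` the chain moves to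
`F x` with probability `min 1 (γ (F x) / γ x)` and stays at `x` otherwise. -/
theorem stmt_0 {S : Type*} [MeasurableSpace S] (lam : Measure S)
    (γ : S → ℝ≥0∞) (hγm : Measurable γ) (hγpos : ∀ x, 0 < γ x)
    (ν : Measure S) [IsProbabilityMeasure ν] (hν : ν = lam.withDensity γ)
    (F : S → S) (hFm : Measurable F) (hFinv : ∀ x, F (F x) = x)
    (hFpres : MeasurePreserving F lam lam)
    (A B : Set S) (hA : MeasurableSet A) (hB : MeasurableSet B) :
    ∫⁻ x in A, (min 1 (γ (F x) / γ x) * B.indicator (1 : S → ℝ≥0∞) (F x)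
        + (1 - min 1 (γ (F x) / γ x)) * B.indicator (1 : S → ℝ≥0∞) x) ∂ν
      = ∫⁻ x in B, (min 1 (γ (F x) / γ x) * A.indicator (1 : S → ℝ≥0∞) (F x)
        + (1 - min 1 (γ (F x) / γ x)) * A.indicator (1 : S → ℝ≥0∞) x) ∂ν := by
  subst hν
  set m : S → ℝ≥0∞ := fun x => min 1 (γ (F x) / γ x) with hm
  have hmm : Measurable m := measurable_const.min ((hγm.comp hFm).div hγm)
  set g : S → ℝ≥0∞ := fun x => m x * γ x with hgdef
  have hgm : Measurable g := hmm.mul hγm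
  -- generic reduction of each side
  have reduce : ∀ (A B : Set S), MeasurableSet A → MeasurableSet B →
      ∫⁻ x in A, (m x * B.indicator (1 : S → ℝ≥0∞) (F x)
        + (1 - m x) * B.indicator (1 : S → ℝ≥0∞) x) ∂(lam.withDensity γ)
      = ∫⁻ x, (A ∩ F ⁻¹' B).indicator g x ∂lam
        + ∫⁻ x, (A ∩ B).indicator (fun x => (1 - m x) * γ x) x ∂lam := by
    intro A B hA hB
    have hfm : Measurable fun x => m x * B.indicator (1 : S → ℝ≥0∞) (F x)
        + (1 - m x) * B.indicator (1 : S → ℝ≥0∞) x := by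
      apply Measurable.add
      · exact hmm.mul ((measurable_one.indicator hB).comp hFm)
      · exact (measurable_const.sub hmm).mul (measurable_one.indicator hB)
    rw [restrict_withDensity hA, lintegral_withDensity_eq_lintegral_mul _ hγm hfm]
    rw [← lintegral_indicator hA]
    rw [← lintegral_add_left (hgm.indicator (hA.inter (hB.preimage hFm)))]
    congr 1
    ext x
    simp only [Pi.mul_apply, Set.indicator]
    by_cases hxA : x ∈ A <;>
      by_cases hxB : x ∈ B <;>
        by_cases hxFB : F x ∈ B <;>
          simp [hxA, hxB, hxFB, Set.mem_inter_iff, Set.mem_preimage, g, mul_add, mul_comm,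
            Pi.one_apply]
  rw [reduce A B hA hB, reduce B A hB hA]
  congr 1
  · -- first terms: use measure preservation and a.e. symmetry of g
    have hγint : ∫⁻ x, γ x ∂lam ≠ ∞ := by
      have h1 : (lam.withDensity γ) Set.univ = 1 := measure_univ
      rw [withDensity_apply _ MeasurableSet.univ, Measure.restrict_univ] at h1
      simp [h1]
    have hfin : ∀ᵐ x ∂lam, γ x < ∞ := ae_lt_top hγm hγint
    have hfinF : ∀ᵐ x ∂lam, γ (F x) < ∞ :=
      hFpres.quasiMeasurePreserving.ae hfin
    have hge : ∀ᵐ x ∂lam, g (F x) = g x := by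
      filter_upwards [hfin, hfinF] with x h1 h2
      have key : ∀ a b : ℝ≥0∞, a ≠ 0 → a ≠ ∞ → b ≠ 0 → b ≠ ∞ →
          min 1 (b / a) * a = min 1 (a / b) * b := by
        intro a b ha ha' hb hb'
        rw [← min_mul_mul_right, ← min_mul_mul_right, one_mul, one_mul,
          ENNReal.div_mul_cancel ha ha', ENNReal.div_mul_cancel hb hb', min_comm]
      simp only [g, m, hFinv]
      exact (key (γ x) (γ (F x)) (hγpos x).ne' h1.ne (hγpos (F x)).ne' h2.ne).symm
    calc ∫⁻ x, (A ∩ F ⁻¹' B).indicator g x ∂lam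
        = ∫⁻ x, (A ∩ F ⁻¹' B).indicator g (F x) ∂lam := by
          rw [hFpres.lintegral_comp (hgm.indicator (hA.inter (hB.preimage hFm)))]
      _ = ∫⁻ x, (B ∩ F ⁻¹' A).indicator (fun x => g (F x)) x ∂lam := by
          congr 1; ext x
          have : F x ∈ A ∩ F ⁻¹' B ↔ x ∈ B ∩ F ⁻¹' A := by
            simp [Set.mem_inter_iff, Set.mem_preimage, hFinv, and_comm]
          by_cases hx : x ∈ B ∩ F ⁻¹' A <;>
            simp [Set.indicator, this, hx]
      _ = ∫⁻ x, (B ∩ F ⁻¹' A).indicator g x ∂lam := by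
          apply lintegral_congr_ae
          filter_upwards [hge] with x hx
          by_cases h : x ∈ B ∩ F ⁻¹' A <;> simp [Set.indicator, h, hx]
  · rw [Set.inter_comm]
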